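/- Let G, H be finite graphs. If there exist Hilbert spaces with unit vectors and projection families giving feasible sets for the tracial rank: η, {E_v}_{v∈V(G)} feasible with value t (i.e., ⟨·η,η⟩ is tracial on the generated C*-algebra, E_v E_w = 0 when v ∼_G w, ⟨E_v η, η⟩ ≥ t^{-1}), and η', {E'_u}_{u∈V(H)} feasible with value t', then the tensor product family η ⊗ η', {E_v ⊗ E'_u}_{(v,u)} is a feasible set with value t·t' for the disjunctive product G ∗ H (where (v,u) ∼ (v',u') iff v ∼_G v' or u ∼_H u'). Consequently ξ_tr(G ∗ H) ≤ ξ_tr(G) ξ_tr(H). -/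

import Mathlib

noncomputable section
open scoped ComplexOrder
/-- A witness for the tracial rank: a unital C*-algebra with a tracial state `s` and
projections `e_v` with `e_v e_w = 0` for adjacent `v, w` and `s(e_v) = u` for all `v`. -/
structure TracialWitness {V : Type*} (G : SimpleGraph V) (u : ℝ) where
  A : Type
  [nring : NormedRing A]
  [sring : StarRing A]
  [cstar : CStarRing A]
  [nalg : NormedAlgebra ℂ A]
  [cs : CompleteSpace A]
  [smod : StarModule ℂ A]
  s : A →ₗ[ℂ] ℂ
  unital : s 1 = 1
  pos : ∀ a : A, 0 ≤ s (star a * a)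
  tracial : ∀ x y : A, s (x * y) = s (y * x)
  e : V → A
  proj : ∀ v, star (e v) = e v ∧ e v * e v = e v
  orth : ∀ v w, G.Adj v w → e v * e w = 0
  val : ∀ v, s (e v) = (u : ℂ)

/-- The tracial rank `ξ_tr(G)`: the reciprocal of the supremum of the feasible values `u`. -/
def tracialRank {V : Type*} (G : SimpleGraph V) : ℝ :=
  (sSup {u : ℝ | Nonempty (TracialWitness G u)})⁻¹

/-- The disjunctive (OR, co-normal) product of two graphs. -/
def disjProd {V W : Type*} (G : SimpleGraph V) (H : SimpleGraph W) :
    SimpleGraph (V × W) where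
  Adj p q := p ≠ q ∧ (G.Adj p.1 q.1 ∨ H.Adj p.2 q.2)
  symm := by
    constructor
    rintro p q ⟨hne, h⟩
    exact ⟨hne.symm, h.imp (fun h' => h'.symm) (fun h' => h'.symm)⟩
  loopless := by
    constructor
    rintro p ⟨hne, -⟩
    exact hne rfl


open scoped TensorProduct
open Complex

section Alg

variable {A B : Type*} [Ring A] [Ring B] [Algebra ℂ A] [Algebra ℂ B]
  [StarRing A] [StarRing B] [StarModule ℂ A] [StarModule ℂ B]

/-- star on the algebraic tensor product -/
def tstar : A ⊗[ℂ] B →+ A ⊗[ℂ] B :=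
  TensorProduct.liftAddHom
    { toFun := fun a =>
        { toFun := fun b => star a ⊗ₜ[ℂ] star b
          map_zero' := by simp
          map_add' := fun b b' => by simp [star_add, TensorProduct.tmul_add] }
      map_zero' := by ext b; simp
      map_add' := fun a a' => by ext b; simp [star_add, TensorProduct.add_tmul] }
    (fun r a b => by
      simp only [AddMonoidHom.coe_mk, ZeroHom.coe_mk, star_smul]
      rw [TensorProduct.smul_tmul])

@[simp] lemma tstar_tmul (a : A) (b : B) : tstar (a ⊗ₜ[ℂ] b) = star a ⊗ₜ[ℂ] star b := rfl

lemma tstar_smul (z : ℂ) (x : A ⊗[ℂ] B) : tstar (z • x) = (starRingEnd ℂ) z • tstar x := by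
  induction x using TensorProduct.induction_on with
  | zero => simp
  | tmul a b =>
      rw [TensorProduct.smul_tmul', tstar_tmul, tstar_tmul, star_smul, TensorProduct.smul_tmul']
      rfl
  | add x y hx hy => simp [smul_add, map_add, hx, hy]

lemma tstar_mul (x y : A ⊗[ℂ] B) : tstar (x * y) = tstar y * tstar x := by
  induction x using TensorProduct.induction_on with
  | zero => simp
  | tmul a b =>
      induction y using TensorProduct.induction_on with
      | zero => simp
      | tmul c d => simp [Algebra.TensorProduct.tmul_mul_tmul, star_mul]
      | add y₁ y₂ h1 h2 => simp [mul_add, add_mul, map_add, h1, h2]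
  | add x₁ x₂ h1 h2 => simp [mul_add, add_mul, map_add, h1, h2]

lemma tstar_tstar (x : A ⊗[ℂ] B) : tstar (tstar x) = x := by
  induction x using TensorProduct.induction_on with
  | zero => simp
  | tmul a b => simp
  | add x y hx hy => simp [map_add, hx, hy]

lemma tstar_one : tstar (1 : A ⊗[ℂ] B) = 1 := by
  rw [Algebra.TensorProduct.one_def, tstar_tmul, star_one, star_one]

/-- the product state on the algebraic tensor product -/
def tphi (s : A →ₗ[ℂ] ℂ) (s' : B →ₗ[ℂ] ℂ) : A ⊗[ℂ] B →ₗ[ℂ] ℂ :=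
  TensorProduct.lift ((LinearMap.mul ℂ ℂ).compl₁₂ s s')

@[simp] lemma tphi_tmul (s : A →ₗ[ℂ] ℂ) (s' : B →ₗ[ℂ] ℂ) (a : A) (b : B) :
    tphi s s' (a ⊗ₜ[ℂ] b) = s a * s' b := rfl

lemma tphi_tracial (s : A →ₗ[ℂ] ℂ) (s' : B →ₗ[ℂ] ℂ)
    (hs : ∀ x y : A, s (x * y) = s (y * x)) (hs' : ∀ x y : B, s' (x * y) = s' (y * x))
    (x y : A ⊗[ℂ] B) : tphi s s' (x * y) = tphi s s' (y * x) := by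
  induction x using TensorProduct.induction_on with
  | zero => simp
  | tmul a b =>
      induction y using TensorProduct.induction_on with
      | zero => simp
      | tmul c d => simp [Algebra.TensorProduct.tmul_mul_tmul, hs a c, hs' b d]
      | add y₁ y₂ h1 h2 => simp [mul_add, add_mul, map_add, h1, h2]
  | add x₁ x₂ h1 h2 => simp [mul_add, add_mul, map_add, h1, h2]

/-- polarization: a sesquilinear form with real diagonal is conj-symmetric -/
lemma sesq_conj {T : Type*} [AddCommGroup T] [Module ℂ T] (Bf : T → T → ℂ)
    (haddl : ∀ x y z, Bf (x + y) z = Bf x z + Bf y z)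
    (haddr : ∀ x y z, Bf x (y + z) = Bf x y + Bf x z)
    (hIl : ∀ x y, Bf (Complex.I • x) y = -Complex.I * Bf x y)
    (hIr : ∀ x y, Bf x (Complex.I • y) = Complex.I * Bf x y)
    (hdiag : ∀ z, (Bf z z).im = 0) (x y : T) :
    (starRingEnd ℂ) (Bf x y) = Bf y x := by
  have h1 := hdiag (x + y)
  rw [haddl, haddr, haddr] at h1
  have h2' : Bf (x + Complex.I • y) (x + Complex.I • y)
      = Bf x x + Complex.I * Bf x y + (-Complex.I * Bf y x) + Bf y y := by
    rw [haddl, haddr, haddr, hIr x y, hIl y x, hIl y (Complex.I • y), hIr y y]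
    ring_nf
    rw [Complex.I_sq]
    ring
  have h2 := hdiag (x + Complex.I • y)
  rw [h2'] at h2
  have hx := hdiag x
  have hy := hdiag y
  simp only [Complex.add_im, Complex.mul_im, Complex.neg_re, Complex.neg_im,
    Complex.I_re, Complex.I_im, Complex.mul_re] at h1 h2 ⊢
  apply Complex.ext <;>
    simp only [Complex.conj_re, Complex.conj_im] <;> linarith [hx, hy]

end Alg

section Alg2
variable {M : Type*} [Ring M] [Algebra ℂ M] [StarRing M] [StarModule ℂ M]

lemma imzero {z : ℂ} (h : 0 ≤ z) : z.im = 0 := ((Complex.le_def.mp h).2).symm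

lemma pos_form_conj (τ : M →ₗ[ℂ] ℂ) (hpos : ∀ a : M, 0 ≤ τ (star a * a)) (x y : M) :
    (starRingEnd ℂ) (τ (star x * y)) = τ (star y * x) := by
  refine sesq_conj (fun x y => τ (star x * y)) ?_ ?_ ?_ ?_ (fun z => imzero (hpos z)) x y
  · intro x y z
    show τ (star (x + y) * z) = τ (star x * z) + τ (star y * z)
    rw [star_add, add_mul, map_add]
  · intro x y z
    show τ (star x * (y + z)) = τ (star x * y) + τ (star x * z)
    rw [mul_add, map_add]
  · intro x y
    show τ (star (Complex.I • x) * y) = -Complex.I * τ (star x * y)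
    simp only [star_smul, smul_mul_assoc, map_smul, smul_eq_mul, Complex.star_def, Complex.conj_I]
  · intro x y
    show τ (star x * (Complex.I • y)) = Complex.I * τ (star x * y)
    rw [mul_smul_comm, map_smul, smul_eq_mul]

lemma expand_sum (τ : M →ₗ[ℂ] ℂ) {ι : Type*} (t : Finset ι) (c : ι → ℂ) (m : ι → M) :
    τ (star (∑ i ∈ t, c i • m i) * ∑ j ∈ t, c j • m j)
      = ∑ i ∈ t, ∑ j ∈ t, (starRingEnd ℂ) (c i) * c j * τ (star (m i) * m j) := by
  rw [star_sum, Finset.sum_mul_sum, map_sum]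
  refine Finset.sum_congr rfl fun i _ => ?_
  rw [map_sum]
  refine Finset.sum_congr rfl fun j _ => ?_
  rw [star_smul, smul_mul_smul_comm, map_smul, smul_eq_mul, starRingEnd_apply]

end Alg2

section Pos
variable {A B : Type*} [Ring A] [Ring B] [Algebra ℂ A] [Algebra ℂ B]
  [StarRing A] [StarRing B] [StarModule ℂ A] [StarModule ℂ B]

lemma tphi_pos (s : A →ₗ[ℂ] ℂ) (s' : B →ₗ[ℂ] ℂ)
    (hpos : ∀ a : A, 0 ≤ s (star a * a)) (hpos' : ∀ b : B, 0 ≤ s' (star b * b))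
    (x : A ⊗[ℂ] B) : 0 ≤ tphi s s' (tstar x * x) := by
  classical
  obtain ⟨S, rfl⟩ := TensorProduct.exists_finset x
  rw [← Finset.sum_coe_sort S]
  set a : S → A := fun i => (i : A × B).1 with ha
  set b : S → B := fun i => (i : A × B).2 with hb
  have hrw : (∑ i : S, (i : A × B).1 ⊗ₜ[ℂ] (i : A × B).2) = ∑ i : S, a i ⊗ₜ[ℂ] b i := rfl
  rw [hrw]
  set N : Matrix S S ℂ := fun i j => s' (star (b i) * b j) with hN
  have hPSD : N.PosSemidef := by
    refine Matrix.PosSemidef.of_dotProduct_mulVec_nonneg ?_ ?_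
    · ext i j
      rw [Matrix.conjTranspose_apply]
      have := pos_form_conj s' hpos' (b j) (b i)
      rw [starRingEnd_apply] at this
      exact this
    · intro c
      have hd : dotProduct (star c) (N.mulVec c)
          = ∑ i : S, ∑ j : S, (starRingEnd ℂ) (c i) * c j * s' (star (b i) * b j) := by
        simp only [dotProduct, Matrix.mulVec, Pi.star_apply, Finset.mul_sum, hN]
        refine Finset.sum_congr rfl fun i _ => Finset.sum_congr rfl fun j _ => ?_
        rw [starRingEnd_apply]
        ring
      rw [hd, ← expand_sum s' Finset.univ c b]
      exact hpos' _
  obtain ⟨C, hC⟩ : ∃ C : Matrix S S ℂ, N = Matrix.conjTranspose C * C := by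
    open scoped MatrixOrder in exact CStarAlgebra.nonneg_iff_eq_star_mul_self.mp hPSD.nonneg
  have hCij : ∀ i j, N i j = ∑ k : S, (starRingEnd ℂ) (C k i) * C k j := by
    intro i j
    have h := congrFun (congrFun hC i) j
    rw [h, Matrix.mul_apply]
    exact Finset.sum_congr rfl fun k _ => by
      rw [Matrix.conjTranspose_apply, starRingEnd_apply]
  have hexp : tphi s s' (tstar (∑ i : S, a i ⊗ₜ[ℂ] b i) * ∑ j : S, a j ⊗ₜ[ℂ] b j)
      = ∑ i : S, ∑ j : S, s (star (a i) * a j) * N i j := by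
    rw [map_sum, Finset.sum_mul_sum, map_sum]
    refine Finset.sum_congr rfl fun i _ => ?_
    rw [map_sum]
    refine Finset.sum_congr rfl fun j _ => ?_
    rw [tstar_tmul, Algebra.TensorProduct.tmul_mul_tmul, tphi_tmul]
  rw [hexp]
  have hswap : ∑ i : S, ∑ j : S, s (star (a i) * a j) * N i j
      = ∑ k : S, s (star (∑ i : S, C k i • a i) * ∑ j : S, C k j • a j) :=
    calc ∑ i : S, ∑ j : S, s (star (a i) * a j) * N i j
        = ∑ i : S, ∑ j : S, ∑ k : S,
            (starRingEnd ℂ) (C k i) * C k j * s (star (a i) * a j) := by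
          refine Finset.sum_congr rfl fun i _ => Finset.sum_congr rfl fun j _ => ?_
          rw [hCij i j, Finset.mul_sum]
          exact Finset.sum_congr rfl fun k _ => by ring
      _ = ∑ i : S, ∑ k : S, ∑ j : S,
            (starRingEnd ℂ) (C k i) * C k j * s (star (a i) * a j) :=
          Finset.sum_congr rfl fun i _ => Finset.sum_comm
      _ = ∑ k : S, ∑ i : S, ∑ j : S,
            (starRingEnd ℂ) (C k i) * C k j * s (star (a i) * a j) := Finset.sum_comm
      _ = ∑ k : S, s (star (∑ i : S, C k i • a i) * ∑ j : S, C k j • a j) :=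
          Finset.sum_congr rfl fun k _ =>
            (expand_sum s Finset.univ (fun i => C k i) a).symm
  rw [hswap]
  exact Finset.sum_nonneg fun k _ => hpos _

end Pos

section Hilb
open UniformSpace

variable {E : Type*} [SeminormedAddCommGroup E] [NormedSpace ℂ E]

/-- Extension of a continuous linear map to the completion. -/
def clmCompletion (f : E →L[ℂ] E) : Completion E →L[ℂ] Completion E :=
  { AddMonoidHom.completion (f : E →+ E) f.continuous with
    map_smul' := by
      intro z x
      simp only [AddMonoidHom.toFun_eq_coe, RingHom.id_apply]
      refine Completion.induction_on x ?_ ?_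
      · exact isClosed_eq
          ((AddMonoidHom.continuous_completion _ _).comp (continuous_const_smul z))
          ((continuous_const_smul z).comp (AddMonoidHom.continuous_completion _ _))
      · intro a
        rw [← Completion.coe_smul, AddMonoidHom.completion_coe _ f.continuous,
          AddMonoidHom.completion_coe _ f.continuous]
        simp [Completion.coe_smul]
    cont := AddMonoidHom.continuous_completion _ _ }

@[simp] lemma clmCompletion_coe (f : E →L[ℂ] E) (x : E) :
    clmCompletion f (x : Completion E) = (f x : Completion E) :=
  AddMonoidHom.completion_coe _ f.continuous x

lemma clm_ext_coe {F G : Completion E →L[ℂ] Completion E}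
    (h : ∀ x : E, F (x : Completion E) = G (x : Completion E)) : F = G := by
  ext x
  refine Completion.induction_on x ?_ h
  exact isClosed_eq F.continuous G.continuous

lemma eq_zero_of_inner_coe [InnerProductSpace ℂ E] {z : Completion E}
    (h : ∀ x : E, (inner ℂ z (x : Completion E) : ℂ) = 0) : z = 0 := by
  have hy : ∀ w : Completion E, (inner ℂ z w : ℂ) = 0 := fun w =>
    Completion.induction_on w
      (isClosed_eq (UniformSpace.Completion.Continuous.inner continuous_const continuous_id)
        continuous_const) h
  exact inner_self_eq_zero.mp (hy z)

end Hilb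


set_option maxHeartbeats 2000000 in
open UniformSpace in
theorem witness_mul {V W : Type*} (G : SimpleGraph V) (H : SimpleGraph W) (u u' : ℝ)
    (w1 : TracialWitness G u) (w2 : TracialWitness H u') :
    Nonempty (TracialWitness (disjProd G H) (u * u')) := by
  classical
  obtain @⟨A, nA1, nA2, nA3, nA4, nA5, nA6, s, hs1, hsp, hst, e, hep, heo, hev⟩ := w1
  obtain @⟨B, nB1, nB2, nB3, nB4, nB5, nB6, s', hs1', hsp', hst', e', hep', heo', hev'⟩ := w2
  letI := nA1; letI := nA2; letI := nA3; letI := nA4; letI := nA5; letI := nA6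
  letI := nB1; letI := nB2; letI := nB3; letI := nB4; letI := nB5; letI := nB6
  set φ : A ⊗[ℂ] B →ₗ[ℂ] ℂ := tphi s s' with hφ
  have hφpos : ∀ x : A ⊗[ℂ] B, 0 ≤ φ (tstar x * x) := tphi_pos s s' hsp hsp'
  have hφtr : ∀ x y : A ⊗[ℂ] B, φ (x * y) = φ (y * x) := tphi_tracial s s' hst hst'
  -- the pre-inner-product structure
  let core : PreInnerProductSpace.Core ℂ (A ⊗[ℂ] B) :=
  { inner := fun x y => φ (tstar x * y)
    conj_inner_symm := fun x y => by
      refine sesq_conj (fun x y => φ (tstar x * y)) ?_ ?_ ?_ ?_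
        (fun z => imzero (hφpos z)) y x
      · intro a b c
        show φ (tstar (a + b) * c) = φ (tstar a * c) + φ (tstar b * c)
        rw [map_add, add_mul, map_add]
      · intro a b c
        show φ (tstar a * (b + c)) = φ (tstar a * b) + φ (tstar a * c)
        rw [mul_add, map_add]
      · intro a b
        show φ (tstar (Complex.I • a) * b) = -Complex.I * φ (tstar a * b)
        rw [tstar_smul, smul_mul_assoc, map_smul, smul_eq_mul]
        simp [Complex.conj_I]
      · intro a b
        show φ (tstar a * (Complex.I • b)) = Complex.I * φ (tstar a * b)
        rw [mul_smul_comm, map_smul, smul_eq_mul]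
    re_inner_nonneg := fun x => by
      have h := (Complex.le_def.mp (hφpos x)).1
      simpa using h
    add_left := fun x y z => by
      show φ (tstar (x + y) * z) = φ (tstar x * z) + φ (tstar y * z)
      rw [map_add, add_mul, map_add]
    smul_left := fun x y r => by
      show φ (tstar (r • x) * y) = (starRingEnd ℂ) r * φ (tstar x * y)
      rw [tstar_smul, smul_mul_assoc, map_smul, smul_eq_mul] }
  letI : SeminormedAddCommGroup (A ⊗[ℂ] B) :=
    @InnerProductSpace.Core.toSeminormedAddCommGroup ℂ _ _ _ _ core
  letI : NormedSpace ℂ (A ⊗[ℂ] B) :=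
    @InnerProductSpace.Core.toNormedSpace ℂ _ _ _ _ core
  letI : InnerProductSpace ℂ (A ⊗[ℂ] B) :=
  { toNormedSpace := inferInstance
    toInner := core.toInner
    norm_sq_eq_re_inner := fun x => by
      have h₁ : ‖x‖ ^ 2 = Real.sqrt (RCLike.re (@inner ℂ _ core.toInner x x)) ^ 2 := rfl
      rw [h₁, Real.sq_sqrt (core.re_inner_nonneg x)]
    conj_inner_symm := core.conj_inner_symm
    add_left := core.add_left
    smul_left := fun x y r => core.smul_left x y r }
  have hinner : ∀ x y : A ⊗[ℂ] B, (inner ℂ x y : ℂ) = φ (tstar x * y) := fun _ _ => rfl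
  have hnormsq : ∀ x : A ⊗[ℂ] B, ‖x‖ ^ 2 = RCLike.re (φ (tstar x * x)) := fun x =>
    InnerProductSpace.norm_sq_eq_re_inner x
  -- the generators and their boundedness
  set gE : V × W → A ⊗[ℂ] B := fun p => e p.1 ⊗ₜ[ℂ] e' p.2 with hgE
  have hgE_star : ∀ p, tstar (gE p) = gE p := fun p => by
    rw [hgE]; simp only [tstar_tmul, (hep p.1).1, (hep' p.2).1]
  have hgE_idem : ∀ p, gE p * gE p = gE p := fun p => by
    rw [hgE]
    simp only [Algebra.TensorProduct.tmul_mul_tmul, (hep p.1).2, (hep' p.2).2]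
  -- key inequality
  have hbound : ∀ p (x : A ⊗[ℂ] B), ‖(LinearMap.mulLeft ℂ (gE p)) x‖ ≤ 1 * ‖x‖ := by
    intro p x
    rw [one_mul, LinearMap.mulLeft_apply]
    set g := gE p with hg
    set q₁ : A ⊗[ℂ] B := (1 - e p.1) ⊗ₜ[ℂ] (1 : B) with hq₁
    set q₂ : A ⊗[ℂ] B := e p.1 ⊗ₜ[ℂ] ((1 : B) - e' p.2) with hq₂
    have hsum : g + q₁ + q₂ = 1 := by
      rw [hg, hq₁, hq₂, hgE, Algebra.TensorProduct.one_def]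
      rw [TensorProduct.sub_tmul, TensorProduct.tmul_sub]
      abel
    have hq₁s : tstar q₁ = q₁ := by
      rw [hq₁]; simp [tstar_tmul, star_sub, (hep p.1).1]
    have hq₂s : tstar q₂ = q₂ := by
      rw [hq₂]; simp [tstar_tmul, star_sub, (hep p.1).1, (hep' p.2).1]
    have hq₁i : q₁ * q₁ = q₁ := by
      rw [hq₁, Algebra.TensorProduct.tmul_mul_tmul, one_mul]
      rw [mul_sub, sub_mul, sub_mul, (hep p.1).2]
      congr 1
      simp
    have hq₂i : q₂ * q₂ = q₂ := by
      rw [hq₂, Algebra.TensorProduct.tmul_mul_tmul, (hep p.1).2]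
      rw [mul_sub, sub_mul, sub_mul, (hep' p.2).2]
      congr 1
      simp
    have hfold : ∀ q : A ⊗[ℂ] B, tstar q = q → q * q = q →
        tstar (q * x) * (q * x) = tstar x * (q * x) := by
      intro q hqs hqi
      rw [tstar_mul, hqs, mul_assoc, ← mul_assoc q q x, hqi]
    have hgs : tstar g = g := hgE_star p
    have hgi : g * g = g := hgE_idem p
    have hsplit : φ (tstar x * x) =
        φ (tstar (g * x) * (g * x)) + φ (tstar (q₁ * x) * (q₁ * x))
          + φ (tstar (q₂ * x) * (q₂ * x)) := by
      rw [hfold g hgs hgi, hfold q₁ hq₁s hq₁i, hfold q₂ hq₂s hq₂i]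
      rw [← map_add, ← map_add, ← mul_add, ← mul_add, ← add_mul, ← add_mul, hsum, one_mul]
    have h1 := hnormsq (g * x)
    have h2 := hnormsq x
    have hp1 : 0 ≤ (φ (tstar (q₁ * x) * (q₁ * x))).re := by
      simpa using (Complex.le_def.mp (hφpos (q₁ * x))).1
    have hp2 : 0 ≤ (φ (tstar (q₂ * x) * (q₂ * x))).re := by
      simpa using (Complex.le_def.mp (hφpos (q₂ * x))).1
    have hre : RCLike.re (φ (tstar (g * x) * (g * x))) ≤ RCLike.re (φ (tstar x * x)) := by
      rw [hsplit]
      simp only [map_add, RCLike.re_to_complex]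
      linarith
    have hsq : ‖g * x‖ ^ 2 ≤ ‖x‖ ^ 2 := by
      rw [h1, h2]; exact hre
    exact (pow_le_pow_iff_left₀ (norm_nonneg _) (norm_nonneg _) two_ne_zero).mp hsq
  
  -- the operators on the completion
  let Lp : V × W → (A ⊗[ℂ] B) →L[ℂ] (A ⊗[ℂ] B) := fun p =>
    LinearMap.mkContinuous (LinearMap.mulLeft ℂ (gE p)) 1 (hbound p)
  let op : V × W → Completion (A ⊗[ℂ] B) →L[ℂ] Completion (A ⊗[ℂ] B) := fun p =>
    clmCompletion (Lp p)
  have hop : ∀ p (x : A ⊗[ℂ] B),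
      op p x = ((gE p * x : A ⊗[ℂ] B) : Completion (A ⊗[ℂ] B)) :=
    fun p x => clmCompletion_coe (Lp p) x
  let S₀ : StarSubalgebra ℂ (Completion (A ⊗[ℂ] B) →L[ℂ] Completion (A ⊗[ℂ] B)) :=
    StarAlgebra.adjoin ℂ (Set.range op)
  let SA := S₀.topologicalClosure
  letI : CompleteSpace SA := (StarSubalgebra.isClosed_topologicalClosure S₀).completeSpace_coe
  let η : Completion (A ⊗[ℂ] B) := ((1 : A ⊗[ℂ] B) : Completion (A ⊗[ℂ] B))
  -- adjoints act as the star elements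
  have hadj : ∀ (X : Completion (A ⊗[ℂ] B) →L[ℂ] Completion (A ⊗[ℂ] B)) (t : A ⊗[ℂ] B),
      (∀ x : A ⊗[ℂ] B, X x = ((t * x : A ⊗[ℂ] B) : Completion (A ⊗[ℂ] B))) →
      ∀ x : A ⊗[ℂ] B,
        (star X) x = ((tstar t * x : A ⊗[ℂ] B) : Completion (A ⊗[ℂ] B)) := by
    intro X t ht x
    have hz : ∀ y : A ⊗[ℂ] B,
        (inner ℂ ((star X) ↑x - ((tstar t * x : A ⊗[ℂ] B) : Completion (A ⊗[ℂ] B)))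
          ((y : Completion (A ⊗[ℂ] B))) : ℂ) = 0 := by
      intro y
      rw [inner_sub_left, ContinuousLinearMap.star_eq_adjoint,
        ContinuousLinearMap.adjoint_inner_left, ht y,
        Completion.inner_coe, Completion.inner_coe, hinner, hinner,
        tstar_mul, tstar_tstar, mul_assoc, sub_self]
    have h0 := eq_zero_of_inner_coe hz
    rwa [sub_eq_zero] at h0
  -- every element of the adjoin is left multiplication by a tensor
  have hcert : ∀ X, X ∈ S₀ → ∃ t : A ⊗[ℂ] B, ∀ x : A ⊗[ℂ] B,
      X x = ((t * x : A ⊗[ℂ] B) : Completion (A ⊗[ℂ] B)) := by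
    intro X hX
    induction hX using StarAlgebra.adjoin_induction with
    | mem X hXm =>
        obtain ⟨p, rfl⟩ := hXm
        exact ⟨gE p, hop p⟩
    | algebraMap z =>
        refine ⟨algebraMap ℂ _ z, fun x => ?_⟩
        rw [Algebra.algebraMap_eq_smul_one, ContinuousLinearMap.smul_apply,
          ContinuousLinearMap.one_apply, ← Algebra.smul_def, Completion.coe_smul]
    | add X Y hX hY ihX ihY =>
        obtain ⟨t₁, h₁⟩ := ihX; obtain ⟨t₂, h₂⟩ := ihY
        refine ⟨t₁ + t₂, fun x => ?_⟩
        rw [ContinuousLinearMap.add_apply, h₁, h₂, add_mul, Completion.coe_add]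
    | mul X Y hX hY ihX ihY =>
        obtain ⟨t₁, h₁⟩ := ihX; obtain ⟨t₂, h₂⟩ := ihY
        refine ⟨t₁ * t₂, fun x => ?_⟩
        rw [ContinuousLinearMap.mul_apply, h₂, h₁, mul_assoc]
    | star X hX ihX =>
        obtain ⟨t, h₁⟩ := ihX
        exact ⟨tstar t, hadj X t h₁⟩
  -- the state on the operator algebra
  let sF : SA →ₗ[ℂ] ℂ :=
  { toFun := fun X =>
      (inner ℂ η ((X : Completion (A ⊗[ℂ] B) →L[ℂ] Completion (A ⊗[ℂ] B)) η) : ℂ)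
    map_add' := fun X Y => by
      show (inner ℂ η (((X + Y : SA) : Completion (A ⊗[ℂ] B) →L[ℂ] Completion (A ⊗[ℂ] B)) η) : ℂ)
        = _
      have : ((X + Y : SA) : Completion (A ⊗[ℂ] B) →L[ℂ] Completion (A ⊗[ℂ] B))
          = (X : _) + (Y : _) := rfl
      rw [this, ContinuousLinearMap.add_apply, inner_add_right]
    map_smul' := fun z X => by
      show (inner ℂ η (((z • X : SA) : Completion (A ⊗[ℂ] B) →L[ℂ] Completion (A ⊗[ℂ] B)) η) : ℂ)
        = _
      have : ((z • X : SA) : Completion (A ⊗[ℂ] B) →L[ℂ] Completion (A ⊗[ℂ] B))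
          = z • (X : _) := rfl
      rw [this, ContinuousLinearMap.smul_apply, inner_smul_right]
      rfl }
  have hsF : ∀ X : SA, sF X =
      (inner ℂ η ((X : Completion (A ⊗[ℂ] B) →L[ℂ] Completion (A ⊗[ℂ] B)) η) : ℂ) :=
    fun _ => rfl
  refine ⟨{ A := SA, s := sF, unital := ?_, pos := ?_, tracial := ?_,
            e := fun p => ⟨op p, S₀.le_topologicalClosure
              (StarAlgebra.subset_adjoin ℂ _ ⟨p, rfl⟩)⟩,
            proj := ?_, orth := ?_, val := ?_ }⟩
  · -- unital
    rw [hsF]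
    have h1 : ((1 : SA) : Completion (A ⊗[ℂ] B) →L[ℂ] Completion (A ⊗[ℂ] B)) = 1 := rfl
    rw [h1, ContinuousLinearMap.one_apply]
    show (inner ℂ ((1 : A ⊗[ℂ] B) : Completion (A ⊗[ℂ] B)) ((1 : A ⊗[ℂ] B) : Completion (A ⊗[ℂ] B)) : ℂ) = 1
    rw [Completion.inner_coe, hinner, tstar_one, one_mul, Algebra.TensorProduct.one_def,
      tphi_tmul, hs1, hs1', one_mul]
  · -- pos
    intro a
    rw [hsF]
    have hc : ((star a * a : SA) : Completion (A ⊗[ℂ] B) →L[ℂ] Completion (A ⊗[ℂ] B))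
        = star ((a : SA) : Completion (A ⊗[ℂ] B) →L[ℂ] Completion (A ⊗[ℂ] B))
          * ((a : SA) : Completion (A ⊗[ℂ] B) →L[ℂ] Completion (A ⊗[ℂ] B)) := rfl
    rw [hc, ContinuousLinearMap.mul_apply, ContinuousLinearMap.star_eq_adjoint,
      ContinuousLinearMap.adjoint_inner_right]
    rw [Complex.le_def]
    constructor
    · simpa using inner_self_nonneg (𝕜 := ℂ)
        (x := ((a : SA) : Completion (A ⊗[ℂ] B) →L[ℂ] Completion (A ⊗[ℂ] B)) η)
    · have h := inner_self_im (𝕜 := ℂ)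
        (x := ((a : SA) : Completion (A ⊗[ℂ] B) →L[ℂ] Completion (A ⊗[ℂ] B)) η)
      simp only [RCLike.im_to_complex] at h
      simpa using h.symm
  · -- tracial
    intro X Y
    have hX : (X : Completion (A ⊗[ℂ] B) →L[ℂ] Completion (A ⊗[ℂ] B)) ∈
        closure (S₀ : Set _) := X.2
    have hY : (Y : Completion (A ⊗[ℂ] B) →L[ℂ] Completion (A ⊗[ℂ] B)) ∈
        closure (S₀ : Set _) := Y.2
    let f : (Completion (A ⊗[ℂ] B) →L[ℂ] Completion (A ⊗[ℂ] B)) ×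
        (Completion (A ⊗[ℂ] B) →L[ℂ] Completion (A ⊗[ℂ] B)) → ℂ := fun P =>
      (inner ℂ η ((P.1 * P.2) η) : ℂ) - (inner ℂ η ((P.2 * P.1) η) : ℂ)
    have happ : Continuous fun T : Completion (A ⊗[ℂ] B) →L[ℂ] Completion (A ⊗[ℂ] B) =>
        T η := (ContinuousLinearMap.apply ℂ (Completion (A ⊗[ℂ] B)) η).continuous
    have hmul : Continuous fun P : (Completion (A ⊗[ℂ] B) →L[ℂ] Completion (A ⊗[ℂ] B)) ×
        (Completion (A ⊗[ℂ] B) →L[ℂ] Completion (A ⊗[ℂ] B)) => P.1 * P.2 := continuous_mul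
    have hswap : Continuous fun P : (Completion (A ⊗[ℂ] B) →L[ℂ] Completion (A ⊗[ℂ] B)) ×
        (Completion (A ⊗[ℂ] B) →L[ℂ] Completion (A ⊗[ℂ] B)) => (P.2, P.1) :=
      continuous_snd.prodMk continuous_fst
    have hfc : Continuous f :=
      ((Continuous.inner continuous_const (happ.comp hmul)).sub
        (Continuous.inner continuous_const (happ.comp (hmul.comp hswap))))
    have hzero : ∀ P ∈ (S₀ : Set _) ×ˢ (S₀ : Set _), f P = 0 := by
      rintro ⟨P1, P2⟩ ⟨hP1, hP2⟩
      obtain ⟨t, ht⟩ := hcert P1 hP1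
      obtain ⟨t', ht'⟩ := hcert P2 hP2
      have key : ∀ (Q R : Completion (A ⊗[ℂ] B) →L[ℂ] Completion (A ⊗[ℂ] B))
          (r r' : A ⊗[ℂ] B),
          (∀ x : A ⊗[ℂ] B, Q ((x : Completion (A ⊗[ℂ] B)))
            = ((r * x : A ⊗[ℂ] B) : Completion (A ⊗[ℂ] B))) →
          (∀ x : A ⊗[ℂ] B, R ((x : Completion (A ⊗[ℂ] B)))
            = ((r' * x : A ⊗[ℂ] B) : Completion (A ⊗[ℂ] B))) →
          (inner ℂ η ((Q * R) η) : ℂ) = φ (r * r') := by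
        intro Q R r r' hQ hR
        have h1 : (Q * R) η = ((r * (r' * 1) : A ⊗[ℂ] B) : Completion (A ⊗[ℂ] B)) := by
          rw [ContinuousLinearMap.mul_apply]
          show Q (R ((1 : A ⊗[ℂ] B) : Completion (A ⊗[ℂ] B))) = _
          rw [hR 1, hQ (r' * 1)]
        rw [h1, mul_one]
        show (inner ℂ ((1 : A ⊗[ℂ] B) : Completion (A ⊗[ℂ] B))
          ((r * r' : A ⊗[ℂ] B) : Completion (A ⊗[ℂ] B)) : ℂ) = φ (r * r')
        rw [Completion.inner_coe, hinner, tstar_one, one_mul]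
      show (inner ℂ η ((P1 * P2) η) : ℂ) - (inner ℂ η ((P2 * P1) η) : ℂ) = 0
      rw [key P1 P2 t t' ht ht', key P2 P1 t' t ht' ht, hφtr, sub_self]
    have hcl : ((X : Completion (A ⊗[ℂ] B) →L[ℂ] Completion (A ⊗[ℂ] B)),
        (Y : Completion (A ⊗[ℂ] B) →L[ℂ] Completion (A ⊗[ℂ] B))) ∈
        closure ((S₀ : Set _) ×ˢ (S₀ : Set _)) := by
      rw [closure_prod_eq]; exact ⟨hX, hY⟩
    have hf0 : f ((X : _), (Y : _)) = 0 :=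
      closure_minimal hzero (isClosed_eq hfc continuous_const) hcl
    have hXY : ((X * Y : SA) : Completion (A ⊗[ℂ] B) →L[ℂ] Completion (A ⊗[ℂ] B))
        = (X : _) * (Y : _) := rfl
    have hYX : ((Y * X : SA) : Completion (A ⊗[ℂ] B) →L[ℂ] Completion (A ⊗[ℂ] B))
        = (Y : _) * (X : _) := rfl
    rw [hsF, hsF, hXY, hYX]
    exact sub_eq_zero.mp hf0
  · -- proj
    intro p
    constructor
    · apply Subtype.ext
      show star (op p) = op p
      apply clm_ext_coe
      intro x
      rw [hadj (op p) (gE p) (hop p) x, hop p x, hgE_star]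
    · apply Subtype.ext
      show (op p) * (op p) = op p
      apply clm_ext_coe
      intro x
      rw [ContinuousLinearMap.mul_apply, hop p x, hop p (gE p * x), ← mul_assoc, hgE_idem]
  · -- orth
    intro p q hpq
    apply Subtype.ext
    show (op p) * (op q) = 0
    apply clm_ext_coe
    intro x
    have h0 : gE p * gE q = 0 := by
      rw [hgE]
      simp only [Algebra.TensorProduct.tmul_mul_tmul]
      rcases hpq.2 with h | h
      · rw [heo _ _ h, TensorProduct.zero_tmul]
      · rw [heo' _ _ h, TensorProduct.tmul_zero]
    rw [ContinuousLinearMap.mul_apply, hop q x, hop p (gE q * x), ← mul_assoc, h0, zero_mul,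
      ContinuousLinearMap.zero_apply, Completion.coe_zero]
  · -- val
    intro p
    rw [hsF]
    show (inner ℂ η ((op p) η) : ℂ) = ((u * u' : ℝ) : ℂ)
    rw [hop p 1, mul_one]
    show (inner ℂ ((1 : A ⊗[ℂ] B) : Completion (A ⊗[ℂ] B))
      ((gE p : A ⊗[ℂ] B) : Completion (A ⊗[ℂ] B)) : ℂ) = ((u * u' : ℝ) : ℂ)
    rw [Completion.inner_coe, hinner, tstar_one, one_mul, hgE]
    show tphi s s' (e p.1 ⊗ₜ[ℂ] e' p.2) = _
    rw [tphi_tmul, hev, hev']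
    norm_cast

lemma triv_witness {V : Type*} (G : SimpleGraph V) : Nonempty (TracialWitness G 0) :=
  ⟨{ A := ℂ, s := LinearMap.id, unital := rfl,
     pos := fun a => star_mul_self_nonneg a,
     tracial := fun x y => by simp [mul_comm],
     e := fun _ => 0,
     proj := fun v => ⟨star_zero _, mul_zero 0⟩,
     orth := fun _ _ _ => zero_mul 0,
     val := fun v => by simp }⟩

lemma all_witness {V : Type*} (G : SimpleGraph V) (hV : IsEmpty V) (t : ℝ) :
    Nonempty (TracialWitness G t) :=
  ⟨{ A := ℂ, s := LinearMap.id, unital := rfl,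
     pos := fun a => star_mul_self_nonneg a,
     tracial := fun x y => by simp [mul_comm],
     e := fun v => hV.elim v,
     proj := fun v => hV.elim v,
     orth := fun v _ _ => hV.elim v,
     val := fun v => hV.elim v }⟩

lemma mem_bounds {V : Type*} {G : SimpleGraph V} {t : ℝ} (hV : Nonempty V)
    (w : TracialWitness G t) : 0 ≤ t ∧ t ≤ 1 := by
  obtain ⟨v⟩ := hV
  letI := w.nring; letI := w.sring; letI := w.cstar
  letI := w.nalg; letI := w.cs; letI := w.smod
  constructor
  · have h := w.pos (w.e v)
    rw [(w.proj v).1, (w.proj v).2, w.val v] at h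
    have h2 := (Complex.le_def.mp h).1
    simpa using h2
  · have h := w.pos (1 - w.e v)
    have hstar : star (1 - w.e v) = 1 - w.e v := by
      rw [star_sub, star_one, (w.proj v).1]
    have hmul : (1 - w.e v) * (1 - w.e v) = 1 - w.e v := by
      rw [sub_mul, one_mul, mul_sub, mul_one, (w.proj v).2, sub_self, sub_zero]
    rw [hstar, hmul, map_sub, w.unital, w.val v] at h
    have h2 := (Complex.le_def.mp h).1
    simp only [Complex.zero_re, Complex.sub_re, Complex.one_re, Complex.ofReal_re] at h2
    linarith

lemma restrict_left {V W : Type*} {G : SimpleGraph V} {H : SimpleGraph W} {t : ℝ}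
    (hW : Nonempty W) (w : TracialWitness (disjProd G H) t) :
    Nonempty (TracialWitness G t) := by
  obtain ⟨w0⟩ := hW
  letI := w.nring; letI := w.sring; letI := w.cstar
  letI := w.nalg; letI := w.cs; letI := w.smod
  exact ⟨{ A := w.A, s := w.s, unital := w.unital, pos := w.pos, tracial := w.tracial,
           e := fun v => w.e (v, w0),
           proj := fun v => w.proj (v, w0),
           orth := fun v v' h => w.orth _ _
             ⟨fun hc => h.ne (congrArg Prod.fst hc), Or.inl h⟩,
           val := fun v => w.val (v, w0) }⟩

lemma restrict_right {V W : Type*} {G : SimpleGraph V} {H : SimpleGraph W} {t : ℝ}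
    (hV : Nonempty V) (w : TracialWitness (disjProd G H) t) :
    Nonempty (TracialWitness H t) := by
  obtain ⟨v0⟩ := hV
  letI := w.nring; letI := w.sring; letI := w.cstar
  letI := w.nalg; letI := w.cs; letI := w.smod
  exact ⟨{ A := w.A, s := w.s, unital := w.unital, pos := w.pos, tracial := w.tracial,
           e := fun x => w.e (v0, x),
           proj := fun x => w.proj (v0, x),
           orth := fun x x' h => w.orth _ _
             ⟨fun hc => h.ne (congrArg Prod.snd hc), Or.inr h⟩,
           val := fun x => w.val (v0, x) }⟩


/-- Feasible sets for the tracial rank multiply under the disjunctive product, and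
consequently `ξ_tr(G ∗ H) ≤ ξ_tr(G) ξ_tr(H)`. -/
theorem stmt13 {V W : Type*} (G : SimpleGraph V) (H : SimpleGraph W) :
    (∀ (u u' : ℝ), TracialWitness G u → TracialWitness H u' →
      Nonempty (TracialWitness (disjProd G H) (u * u'))) ∧
    tracialRank (disjProd G H) ≤ tracialRank G * tracialRank H := by
  have hmul : ∀ (u u' : ℝ), TracialWitness G u → TracialWitness H u' →
      Nonempty (TracialWitness (disjProd G H) (u * u')) := fun u u' w1 w2 =>
    witness_mul G H u u' w1 w2
  refine ⟨hmul, ?_⟩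
  unfold tracialRank
  set SG := {u : ℝ | Nonempty (TracialWitness G u)} with hSGdef
  set SH := {u : ℝ | Nonempty (TracialWitness H u)} with hSHdef
  set SP := {u : ℝ | Nonempty (TracialWitness (disjProd G H) u)} with hSPdef
  by_cases hV : Nonempty V
  · by_cases hW : Nonempty W
    · have h0G : (0:ℝ) ∈ SG := triv_witness G
      have h0H : (0:ℝ) ∈ SH := triv_witness H
      have h0P : (0:ℝ) ∈ SP := triv_witness _
      have hbG : BddAbove SG := ⟨1, fun t ht => (mem_bounds hV ht.some).2⟩
      have hbH : BddAbove SH := ⟨1, fun t ht => (mem_bounds hW ht.some).2⟩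
      have hVW : Nonempty (V × W) := ⟨(hV.some, hW.some)⟩
      have hbP : BddAbove SP := ⟨1, fun t ht => (mem_bounds hVW ht.some).2⟩
      set a := sSup SG with hadef
      set b := sSup SH with hbdef
      set c := sSup SP with hcdef
      have ha0 : 0 ≤ a := le_csSup hbG h0G
      have hb0 : 0 ≤ b := le_csSup hbH h0H
      have hc0 : 0 ≤ c := le_csSup hbP h0P
      have hstep1 : ∀ x ∈ SG, ∀ y ∈ SH, x * y ≤ c := fun x hx y hy =>
        le_csSup hbP (hmul x y hx.some hy.some)
      have hstep2 : ∀ x ∈ SG, x * b ≤ c := by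
        intro x hx
        rcases lt_or_eq_of_le (mem_bounds hV hx.some).1 with hx0 | hx0
        · have hble : b ≤ c / x := by
            refine csSup_le ⟨0, h0H⟩ fun y hy => ?_
            rw [le_div_iff₀ hx0, mul_comm]
            exact hstep1 x hx y hy
          calc x * b ≤ x * (c / x) := mul_le_mul_of_nonneg_left hble (le_of_lt hx0)
            _ = c := by field_simp
        · rw [← hx0, zero_mul]; exact hc0
      have hab : a * b ≤ c := by
        rcases lt_or_eq_of_le hb0 with hb' | hb'
        · have hale : a ≤ c / b := by
            refine csSup_le ⟨0, h0G⟩ fun x hx => ?_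
            rw [le_div_iff₀ hb']
            exact hstep2 x hx
          calc a * b ≤ (c / b) * b := mul_le_mul_of_nonneg_right hale hb0
            _ = c := by field_simp
        · rw [← hb', mul_zero]; exact hc0
      rcases lt_or_eq_of_le (mul_nonneg ha0 hb0) with h | h
      · rw [← mul_inv]
        exact inv_anti₀ h hab
      · rcases mul_eq_zero.mp h.symm with h0 | h0
        · have hcz : c = 0 := by
            refine le_antisymm ?_ hc0
            refine csSup_le ⟨0, h0P⟩ fun t ht => ?_
            have h1 : t ∈ SG := restrict_left hW ht.some
            have h2 := le_csSup hbG h1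
            rw [← hadef, h0] at h2
            exact h2
          rw [hcz, h0]
          simp
        · have hcz : c = 0 := by
            refine le_antisymm ?_ hc0
            refine csSup_le ⟨0, h0P⟩ fun t ht => ?_
            have h1 : t ∈ SH := restrict_right hV ht.some
            have h2 := le_csSup hbH h1
            rw [← hbdef, h0] at h2
            exact h2
          rw [hcz, h0]
          simp
    · have hWe : IsEmpty W := not_nonempty_iff.mp hW
      have hPe : IsEmpty (V × W) := ⟨fun p => hWe.elim p.2⟩
      have hSPu : SP = Set.univ := Set.eq_univ_of_forall fun t => all_witness _ hPe t
      have hSHu : SH = Set.univ := Set.eq_univ_of_forall fun t => all_witness _ hWe t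
      rw [hSPu, hSHu, Real.sSup_univ]
      simp
  · have hVe : IsEmpty V := not_nonempty_iff.mp hV
    have hPe : IsEmpty (V × W) := ⟨fun p => hVe.elim p.1⟩
    have hSPu : SP = Set.univ := Set.eq_univ_of_forall fun t => all_witness _ hPe t
    have hSGu : SG = Set.univ := Set.eq_univ_of_forall fun t => all_witness _ hVe t
    rw [hSPu, hSGu, Real.sSup_univ]
    simp
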